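/- Suppose the equation x(k+1) = A(k)x(k) has an exponential dichotomy on the interval [1,∞) with projection P(k). Then this exponential dichotomy can be extended to ℤ₊ = [0,∞) with P(k) unchanged for k ≥ 1 (i.e. there exists a projection P(0) such that the family {P(k)}_{k≥0}, agreeing with the given P(k) for k ≥ 1, is a projection with respect to which the equation has an exponential dichotomy on ℤ₊) if and only if there exists a splitting U ⊕ V = ℝⁿ such that A(0)(U) ⊆ R(P(1)), A(0)(V) = N(P(1)), and A(0) is one-to-one on V. -/

import Mathlib

noncomputable section

open scoped BigOperators

/-- ℝⁿ as a Euclidean space. -/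
abbrev Euc (n : ℕ) := EuclideanSpace ℝ (Fin n)

/-- The transition matrix `Φ(k,m) = A(k-1) ⋯ A(m)`, with `Φ(m,m) = 1`
(and `Φ(k,m) = 1` when `k ≤ m`). -/
def Phi {n : ℕ} (A : ℤ → (Euc n →L[ℝ] Euc n)) (k m : ℤ) : Euc n →L[ℝ] Euc n :=
  (((List.range (k - m).toNat).map fun i => A (m + i)).reverse).prod

/-- `J` is an interval of integers. -/
def IsIntInterval (J : Set ℤ) : Prop :=
  ∀ ⦃a b c : ℤ⦄, a ∈ J → b ∈ J → a ≤ c → c ≤ b → c ∈ J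

/-- The equation `x(k+1) = A(k) x(k)` has an exponential dichotomy on `J` with
projection family `P`, constant `K` and exponent `α`. -/
structure ExpDichotomyOn {n : ℕ} (A : ℤ → (Euc n →L[ℝ] Euc n)) (J : Set ℤ)
    (P : ℤ → (Euc n →L[ℝ] Euc n)) (K α : ℝ) : Prop where
  one_le_K : 1 ≤ K
  alpha_pos : 0 < α
  proj : ∀ k ∈ J, P k ∘L P k = P k
  rank_const : ∀ k ∈ J, ∀ m ∈ J,
    Module.finrank ℝ (LinearMap.range (P k : Euc n →ₗ[ℝ] Euc n)) = Module.finrank ℝ (LinearMap.range (P m : Euc n →ₗ[ℝ] Euc n))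
  invariance : ∀ m ∈ J, ∀ k ∈ J, m ≤ k → Phi A k m ∘L P m = P k ∘L Phi A k m
  forward : ∀ m ∈ J, ∀ k ∈ J, m ≤ k →
    ‖Phi A k m ∘L P m‖ ≤ K * Real.exp (-α * ((k : ℝ) - (m : ℝ)))
  bijOn : ∀ k : ℤ, k ∈ J → k + 1 ∈ J →
    Set.BijOn (A k) (LinearMap.ker (P k : Euc n →ₗ[ℝ] Euc n) : Set (Euc n)) (LinearMap.ker (P (k + 1) : Euc n →ₗ[ℝ] Euc n) : Set (Euc n))
  backward : ∃ Ψ : ℤ → ℤ → (Euc n →L[ℝ] Euc n), ∀ m ∈ J, ∀ k ∈ J, m ≤ k →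
    (∀ x ∈ LinearMap.ker (P m : Euc n →ₗ[ℝ] Euc n), Ψ m k (Phi A k m x) = x) ∧
    (∀ x ∈ LinearMap.ker (P k : Euc n →ₗ[ℝ] Euc n), Ψ m k x ∈ LinearMap.ker (P m : Euc n →ₗ[ℝ] Euc n) ∧ Phi A k m (Ψ m k x) = x) ∧
    ‖Ψ m k ∘L (1 - P k)‖ ≤ K * Real.exp (-α * ((k : ℝ) - (m : ℝ)))

lemma Phi_eq {n : ℕ} (A : ℤ → (Euc n →L[ℝ] Euc n)) (k m : ℤ) :
    Phi A k m = (((List.range (k - m).toNat).map fun i : ℕ => A (m + (i : ℤ))).reverse).prod := by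
  simp only [Phi, bind_pure_comp, List.map_eq_map, List.map_map]
  rfl

lemma Phi_self {n : ℕ} (A : ℤ → (Euc n →L[ℝ] Euc n)) (m : ℤ) : Phi A m m = 1 := by
  simp [Phi_eq]

lemma Phi_succ {n : ℕ} (A : ℤ → (Euc n →L[ℝ] Euc n)) {k m : ℤ} (h : m ≤ k) :
    Phi A (k + 1) m = A k ∘L Phi A k m := by
  rw [Phi_eq, Phi_eq]
  have h1 : (k + 1 - m).toNat = (k - m).toNat + 1 := by omega
  have h2 : (m + ((k - m).toNat : ℤ)) = k := by omega
  rw [h1, List.range_succ, List.map_append, List.reverse_append]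
  simp only [List.map_cons, List.map_nil, List.reverse_cons, List.reverse_nil, List.nil_append,
    List.cons_append, List.prod_cons, h2]
  rfl

lemma Phi_comp {n : ℕ} (A : ℤ → (Euc n →L[ℝ] Euc n)) {m j k : ℤ} (h1 : m ≤ j) (h2 : j ≤ k) :
    Phi A k j ∘L Phi A j m = Phi A k m := by
  refine Int.le_induction (motive := fun k _ => Phi A k j ∘L Phi A j m = Phi A k m) ?_ ?_ k h2
  · show Phi A j j ∘L Phi A j m = Phi A j m
    rw [Phi_self]; ext x; simp
  · intro k hk ih
    show Phi A (k+1) j ∘L Phi A j m = Phi A (k+1) m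
    replace ih : Phi A k j ∘L Phi A j m = Phi A k m := ih
    rw [Phi_succ A hk, Phi_succ A (le_trans h1 hk)]
    ext x
    simp only [ContinuousLinearMap.comp_apply]
    rw [← ih]
    simp

lemma Phi_one_zero {n : ℕ} (A : ℤ → (Euc n →L[ℝ] Euc n)) : Phi A 1 0 = A 0 := by
  have := Phi_succ A (le_refl (0:ℤ))
  rw [Phi_self] at this
  simp only [zero_add] at this
  rw [this]; ext x; simp

lemma Phi_split {n : ℕ} (A : ℤ → (Euc n →L[ℝ] Euc n)) {k : ℤ} (h : 1 ≤ k) :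
    Phi A k 0 = Phi A k 1 ∘L A 0 := by
  rw [← Phi_one_zero A, Phi_comp A (by norm_num) h]


set_option maxHeartbeats 1000000

/-- an exponential dichotomy on `[1, ∞)` with projection `P` extends to
`ℤ₊` with `P(k)` unchanged for `k ≥ 1` if and only if there is a splitting
`U ⊕ V = ℝⁿ` with `A(0)(U) ⊆ R(P(1))`, `A(0)(V) = N(P(1))` and `A(0)` one-to-one
on `V`. -/
theorem statement10 {n : ℕ} (A P : ℤ → (Euc n →L[ℝ] Euc n)) (K α : ℝ)
    (hED : ExpDichotomyOn A {k : ℤ | 1 ≤ k} P K α) :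
    (∃ Q : ℤ → (Euc n →L[ℝ] Euc n), (∀ k : ℤ, 1 ≤ k → Q k = P k) ∧
      ∃ K' α' : ℝ, ExpDichotomyOn A {k : ℤ | 0 ≤ k} Q K' α') ↔
    (∃ U V : Submodule ℝ (Euc n), IsCompl U V ∧
      U.map (A 0 : Euc n →ₗ[ℝ] Euc n) ≤ LinearMap.range (P 1 : Euc n →ₗ[ℝ] Euc n) ∧
      V.map (A 0 : Euc n →ₗ[ℝ] Euc n) = LinearMap.ker (P 1 : Euc n →ₗ[ℝ] Euc n) ∧
      Set.InjOn (A 0) (V : Set (Euc n))) := by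
  have h1' : (1:ℤ) ∈ {k : ℤ | 1 ≤ k} := by simp
  constructor
  · rintro ⟨Q, hQP, K', α', hED'⟩
    have h0 : (0:ℤ) ∈ {k : ℤ | 0 ≤ k} := by simp
    have h1 : (1:ℤ) ∈ {k : ℤ | 0 ≤ k} := by norm_num
    have hQ1 : Q 1 = P 1 := hQP 1 le_rfl
    have hidem : ∀ x, Q 0 (Q 0 x) = Q 0 x := by
      intro x
      have := DFunLike.congr_fun (hED'.proj 0 h0) x
      simpa using this
    have hbij := hED'.bijOn 0 h0 h1
    simp only [zero_add] at hbij
    rw [hQ1] at hbij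
    refine ⟨LinearMap.range (Q 0 : Euc n →ₗ[ℝ] Euc n), LinearMap.ker (Q 0 : Euc n →ₗ[ℝ] Euc n), ⟨?_, ?_⟩, ?_, ?_, ?_⟩
    · rw [disjoint_iff_inf_le]
      rintro x ⟨⟨y, hy⟩, hker⟩
      have hx : Q 0 x = x := by rw [← hy]; exact hidem y
      have hx0 : Q 0 x = 0 := LinearMap.mem_ker.mp hker
      rw [Submodule.mem_bot, ← hx, hx0]
    · rw [codisjoint_iff_le_sup]
      intro x _
      rw [Submodule.mem_sup]
      exact ⟨Q 0 x, ⟨x, rfl⟩, x - Q 0 x,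
        by rw [LinearMap.mem_ker, map_sub]; simp only [ContinuousLinearMap.coe_coe]; rw [hidem, sub_self], by abel⟩
    · rintro y ⟨x, ⟨z, rfl⟩, rfl⟩
      have hinv := hED'.invariance 0 h0 1 h1 (by norm_num)
      rw [Phi_one_zero, hQ1] at hinv
      have := DFunLike.congr_fun hinv z
      simp only [ContinuousLinearMap.comp_apply] at this
      exact ⟨A 0 z, by simpa using this.symm⟩
    · apply le_antisymm
      · rintro y ⟨x, hx, rfl⟩
        simpa using hbij.mapsTo hx
      · intro y hy
        obtain ⟨x, hx, hxy⟩ := hbij.surjOn hy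
        exact ⟨x, hx, hxy⟩
    · exact hbij.injOn
  · rintro ⟨U, V, hcompl, hU, hV, hinj⟩
    -- the projection onto U along V
    set Q0lin : Euc n →ₗ[ℝ] Euc n := U.subtype ∘ₗ (U.linearProjOfIsCompl V hcompl) with hQ0lin
    set Q0 : Euc n →L[ℝ] Euc n := LinearMap.toContinuousLinearMap Q0lin with hQ0def
    have hQ0coe : ∀ x, Q0 x = Q0lin x := fun x =>
      congrFun (LinearMap.coe_toContinuousLinearMap' Q0lin) x
    have hQ0U : ∀ u ∈ U, Q0 u = u := by
      intro u hu
      rw [hQ0coe]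
      have h : (U.linearProjOfIsCompl V hcompl) u = ⟨u, hu⟩ :=
        Submodule.linearProjOfIsCompl_apply_left hcompl ⟨u, hu⟩
      simp [hQ0lin, h]
    have hQ0V : ∀ v ∈ V, Q0 v = 0 := by
      intro v hv
      rw [hQ0coe]
      have h : (U.linearProjOfIsCompl V hcompl) v = 0 :=
        Submodule.linearProjOfIsCompl_apply_right' hcompl hv
      simp [hQ0lin, h]
    have hQ0mem : ∀ x, Q0 x ∈ U := by
      intro x
      rw [hQ0coe]
      exact SetLike.coe_mem ((U.linearProjOfIsCompl V hcompl) x)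
    have hsubV : ∀ x, x - Q0 x ∈ V := by
      intro x
      obtain ⟨u, hu, v, hv, huv⟩ :=
        Submodule.mem_sup.mp (show x ∈ U ⊔ V by rw [hcompl.sup_eq_top]; trivial)
      have hq : Q0 x = u := by
        rw [← huv, map_add, hQ0U u hu, hQ0V v hv, add_zero]
      have : x - Q0 x = v := by rw [hq, ← huv]; abel
      rw [this]; exact hv
    have hkerV : ∀ x, Q0 x = 0 ↔ x ∈ V := by
      intro x
      constructor
      · intro h
        have := hsubV x
        rwa [h, sub_zero] at this
      · exact hQ0V x
    have hQ0idem : Q0 ∘L Q0 = Q0 := by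
      apply ContinuousLinearMap.ext
      intro x
      simp only [ContinuousLinearMap.comp_apply]
      exact hQ0U _ (hQ0mem x)
    have hP1fix : ∀ y ∈ LinearMap.range (P 1 : Euc n →ₗ[ℝ] Euc n), P 1 y = y := by
      rintro y ⟨z, rfl⟩
      have := DFunLike.congr_fun (hED.proj 1 h1') z
      simpa using this
    have hVmapmem : ∀ v ∈ V, A 0 v ∈ LinearMap.ker (P 1 : Euc n →ₗ[ℝ] Euc n) := by
      intro v hv
      rw [← hV]
      exact Submodule.mem_map.mpr ⟨v, hv, rfl⟩
    have hkey : ∀ x, P 1 (A 0 x) = A 0 (Q0 x) := by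
      intro x
      have hu : A 0 (Q0 x) ∈ LinearMap.range (P 1 : Euc n →ₗ[ℝ] Euc n) :=
        hU (Submodule.mem_map.mpr ⟨Q0 x, hQ0mem x, rfl⟩)
      have hv : P 1 (A 0 (x - Q0 x)) = 0 :=
        LinearMap.mem_ker.mp (hVmapmem _ (hsubV x))
      have hsplit : A 0 x = A 0 (Q0 x) + A 0 (x - Q0 x) := by
        rw [← map_add]; congr 1; abel
      rw [hsplit, map_add, hP1fix _ hu, hv, add_zero]
    -- the linear equivalence V ≃ ker (P 1) induced by A 0
    set f : V →ₗ[ℝ] LinearMap.ker (P 1 : Euc n →ₗ[ℝ] Euc n) :=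
      LinearMap.codRestrict (LinearMap.ker (P 1 : Euc n →ₗ[ℝ] Euc n))
        (((A 0 : Euc n →ₗ[ℝ] Euc n)).comp V.subtype) (fun v => hVmapmem v v.2) with hfdef
    have hf_apply : ∀ v : V, ((f v : Euc n)) = A 0 v := fun v => rfl
    have hfbij : Function.Bijective f := by
      constructor
      · intro v w hvw
        apply Subtype.ext
        apply hinj v.2 w.2
        have := congrArg (Subtype.val) hvw
        exact this
      · intro y
        have hy : (y : Euc n) ∈ V.map (A 0 : Euc n →ₗ[ℝ] Euc n) := by rw [hV]; exact y.2
        obtain ⟨v, hv, hvy⟩ := Submodule.mem_map.mp hy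
        exact ⟨⟨v, hv⟩, Subtype.ext hvy⟩
    set e := LinearEquiv.ofBijective f hfbij with hedef
    have he_apply : ∀ v : V, ((e v : Euc n)) = A 0 v := fun v => rfl
    have he_symm : ∀ y : LinearMap.ker (P 1 : Euc n →ₗ[ℝ] Euc n), A 0 ((e.symm y : Euc n)) = y := by
      intro y
      have := he_apply (e.symm y)
      rw [e.apply_symm_apply] at this
      exact this.symm
    -- the "inverse of A 0 on V" map
    set Slin : Euc n →ₗ[ℝ] Euc n :=
      V.subtype ∘ₗ (e.symm : LinearMap.ker (P 1 : Euc n →ₗ[ℝ] Euc n) →ₗ[ℝ] V) ∘ₗ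
        (Submodule.orthogonalProjectionOnto (LinearMap.ker (P 1 : Euc n →ₗ[ℝ] Euc n))).toLinearMap with hSlin
    set S : Euc n →L[ℝ] Euc n := LinearMap.toContinuousLinearMap Slin with hSdef
    have hScoe : ∀ y, S y = Slin y := fun y =>
      congrFun (LinearMap.coe_toContinuousLinearMap' Slin) y
    have hS_apply : ∀ y, S y = ((e.symm (Submodule.orthogonalProjectionOnto (LinearMap.ker (P 1 : Euc n →ₗ[ℝ] Euc n)) y) : Euc n)) := by
      intro y
      rw [hScoe]
      rfl
    have hS_memV : ∀ y, S y ∈ V := by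
      intro y
      rw [hS_apply]
      exact SetLike.coe_mem _
    have hS_ker : ∀ y, (hy : y ∈ LinearMap.ker (P 1 : Euc n →ₗ[ℝ] Euc n)) → A 0 (S y) = y := by
      intro y hy
      rw [hS_apply]
      have hproj : Submodule.orthogonalProjectionOnto (LinearMap.ker (P 1 : Euc n →ₗ[ℝ] Euc n)) y = ⟨y, hy⟩ :=
        Submodule.orthogonalProjectionOnto_mem_subspace_eq_self (⟨y, hy⟩ : LinearMap.ker (P 1 : Euc n →ₗ[ℝ] Euc n))
      rw [hproj]
      exact he_symm ⟨y, hy⟩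
    have hS_inv : ∀ v ∈ V, S (A 0 v) = v := by
      intro v hv
      have hyk : A 0 v ∈ LinearMap.ker (P 1 : Euc n →ₗ[ℝ] Euc n) := hVmapmem v hv
      rw [hS_apply]
      have hproj : Submodule.orthogonalProjectionOnto (LinearMap.ker (P 1 : Euc n →ₗ[ℝ] Euc n)) (A 0 v) = ⟨A 0 v, hyk⟩ :=
        Submodule.orthogonalProjectionOnto_mem_subspace_eq_self (⟨A 0 v, hyk⟩ : LinearMap.ker (P 1 : Euc n →ₗ[ℝ] Euc n))
      rw [hproj]
      have : (⟨A 0 v, hyk⟩ : LinearMap.ker (P 1 : Euc n →ₗ[ℝ] Euc n)) = e ⟨v, hv⟩ := Subtype.ext (he_apply ⟨v, hv⟩).symm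
      rw [this, e.symm_apply_apply]
    -- the extended projection family
    set Q : ℤ → (Euc n →L[ℝ] Euc n) := fun k => if 1 ≤ k then P k else Q0 with hQdef
    have hQge1 : ∀ k : ℤ, 1 ≤ k → Q k = P k := fun k hk => if_pos hk
    have hQzero : Q 0 = Q0 := if_neg (by norm_num)
    -- constants
    have hK0 : (0:ℝ) < K := lt_of_lt_of_le one_pos hED.one_le_K
    set K' : ℝ := K + K * Real.exp α * ‖A 0‖ + K * Real.exp α * ‖S‖ + ‖Q0‖ +
      ‖(1 : Euc n →L[ℝ] Euc n) - Q0‖ with hK'def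
    have hC1 : 0 ≤ K * Real.exp α * ‖A 0‖ := by positivity
    have hC2 : 0 ≤ K * Real.exp α * ‖S‖ := by positivity
    have hKK' : K ≤ K' := by
      rw [hK'def]
      have := norm_nonneg Q0
      have := norm_nonneg ((1 : Euc n →L[ℝ] Euc n) - Q0)
      linarith
    have hQ0K' : ‖Q0‖ ≤ K' := by
      rw [hK'def]
      have := norm_nonneg ((1 : Euc n →L[ℝ] Euc n) - Q0)
      linarith
    have h1mQ0K' : ‖(1 : Euc n →L[ℝ] Euc n) - Q0‖ ≤ K' := by
      rw [hK'def]
      have := norm_nonneg Q0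
      linarith
    have hexp : ∀ k : ℤ, Real.exp (-α * ((k:ℝ) - 1)) =
        Real.exp α * Real.exp (-α * ((k:ℝ) - 0)) := by
      intro k
      rw [← Real.exp_add]
      congr 1
      ring
    have hexppos : ∀ x : ℝ, 0 < Real.exp x := Real.exp_pos
    have hrangeQ0 : LinearMap.range (Q0 : Euc n →ₗ[ℝ] Euc n) = U := by
      apply le_antisymm
      · rintro y ⟨x, rfl⟩
        exact hQ0mem x
      · intro u hu
        exact ⟨u, hQ0U u hu⟩
    have hrank1 : Module.finrank ℝ (LinearMap.range (Q0 : Euc n →ₗ[ℝ] Euc n)) =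
        Module.finrank ℝ (LinearMap.range (P 1 : Euc n →ₗ[ℝ] Euc n)) := by
      have hfr1 : Module.finrank ℝ U + Module.finrank ℝ V = Module.finrank ℝ (Euc n) :=
        Submodule.finrank_add_eq_of_isCompl hcompl
      have hfr2 : Module.finrank ℝ (LinearMap.range (P 1 : Euc n →ₗ[ℝ] Euc n)) +
          Module.finrank ℝ (LinearMap.ker (P 1 : Euc n →ₗ[ℝ] Euc n)) = Module.finrank ℝ (Euc n) :=
        LinearMap.finrank_range_add_finrank_ker ((P 1 : Euc n →ₗ[ℝ] Euc n))
      have hfr3 : Module.finrank ℝ V = Module.finrank ℝ (LinearMap.ker (P 1 : Euc n →ₗ[ℝ] Euc n)) :=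
        e.finrank_eq
      rw [hrangeQ0]
      omega
    have hrankaux : ∀ j : ℤ, 0 ≤ j → Module.finrank ℝ (LinearMap.range (Q j : Euc n →ₗ[ℝ] Euc n)) =
        Module.finrank ℝ (LinearMap.range (P 1 : Euc n →ₗ[ℝ] Euc n)) := by
      intro j hj
      by_cases hj1 : 1 ≤ j
      · rw [hQge1 j hj1]
        exact hED.rank_const j hj1 1 h1'
      · have hj0 : j = 0 := by omega
        subst hj0
        rw [hQzero]
        exact hrank1
    refine ⟨Q, hQge1, K', α, ?_⟩
    obtain ⟨Ψ, hΨ⟩ := hED.backward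
    refine ⟨le_trans hED.one_le_K hKK', hED.alpha_pos, ?_, ?_, ?_, ?_, ?_, ?_⟩
    · -- proj
      intro k hk
      have hk0 : (0:ℤ) ≤ k := hk
      by_cases hk1 : 1 ≤ k
      · rw [hQge1 k hk1]; exact hED.proj k hk1
      · have : k = 0 := by omega
        subst this
        rw [hQzero]; exact hQ0idem
    · -- rank_const
      intro k hk m hm
      rw [hrankaux k hk, hrankaux m hm]
    · -- invariance
      intro m hm k hk hmk
      have hm0 : (0:ℤ) ≤ m := hm
      by_cases hm1 : 1 ≤ m
      · rw [hQge1 m hm1, hQge1 k (by omega)]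
        exact hED.invariance m hm1 k (by omega : (1:ℤ) ≤ k) hmk
      · have : m = 0 := by omega
        subst this
        by_cases hk1 : 1 ≤ k
        · rw [hQzero, hQge1 k hk1, Phi_split A hk1]
          apply ContinuousLinearMap.ext
          intro x
          simp only [ContinuousLinearMap.comp_apply]
          rw [← hkey x]
          have := DFunLike.congr_fun (hED.invariance 1 h1' k hk1 hk1) (A 0 x)
          simpa using this
        · have : k = 0 := by omega
          subst this
          rw [Phi_self]
          ext x; simp
    · -- forward
      intro m hm k hk hmk
      have hm0 : (0:ℤ) ≤ m := hm
      by_cases hm1 : 1 ≤ m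
      · rw [hQge1 m hm1]
        refine le_trans (hED.forward m hm1 k (by omega : (1:ℤ) ≤ k) hmk) ?_
        exact mul_le_mul_of_nonneg_right hKK' (le_of_lt (hexppos _))
      · have : m = 0 := by omega
        subst this
        by_cases hk1 : 1 ≤ k
        · have heq : Phi A k 0 ∘L Q 0 = (Phi A k 1 ∘L P 1) ∘L A 0 := by
            rw [hQzero, Phi_split A hk1]
            apply ContinuousLinearMap.ext
            intro x
            simp only [ContinuousLinearMap.comp_apply]
            rw [← hkey x]
          rw [heq]
          refine le_trans (ContinuousLinearMap.opNorm_comp_le _ _) ?_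
          have hb := hED.forward 1 h1' k hk1 hk1
          push_cast at hb ⊢
          have hnorm : ‖Phi A k 1 ∘L P 1‖ * ‖A 0‖ ≤
              (K * Real.exp (-α * ((k:ℝ) - 1))) * ‖A 0‖ :=
            mul_le_mul_of_nonneg_right hb (norm_nonneg _)
          refine le_trans hnorm ?_
          rw [hexp k]
          have hfin : K * (Real.exp α * Real.exp (-α * ((k:ℝ) - 0))) * ‖A 0‖ =
              (K * Real.exp α * ‖A 0‖) * Real.exp (-α * ((k:ℝ) - 0)) := by ring
          rw [hfin]
          refine mul_le_mul_of_nonneg_right ?_ (le_of_lt (hexppos _))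
          rw [hK'def]
          have := norm_nonneg Q0
          have := norm_nonneg ((1 : Euc n →L[ℝ] Euc n) - Q0)
          linarith
        · have : k = 0 := by omega
          subst this
          rw [Phi_self]
          have heq : (1 : Euc n →L[ℝ] Euc n) ∘L Q 0 = Q0 := by
            rw [hQzero]; ext x; simp
          rw [heq]
          have hzero : -α * (((0:ℤ):ℝ) - ((0:ℤ):ℝ)) = 0 := by push_cast; ring
          rw [hzero, Real.exp_zero, mul_one]
          exact hQ0K'
    · -- bijOn
      intro k hk hk1'
      have hk0 : (0:ℤ) ≤ k := hk
      by_cases hk1 : 1 ≤ k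
      · rw [hQge1 k hk1, hQge1 (k+1) (by omega)]
        exact hED.bijOn k hk1 (by omega : (1:ℤ) ≤ k + 1)
      · have : k = 0 := by omega
        subst this
        simp only [zero_add]
        rw [hQzero, hQge1 1 le_rfl]
        have hset : (LinearMap.ker (Q0 : Euc n →ₗ[ℝ] Euc n) : Set (Euc n)) = (V : Set (Euc n)) := by
          ext x
          simp only [SetLike.mem_coe, LinearMap.mem_ker]
          exact hkerV x
        rw [hset]
        refine ⟨fun v hv => ?_, hinj, fun y hy => ?_⟩
        · exact hVmapmem v hv
        · have hy' : y ∈ V.map (A 0 : Euc n →ₗ[ℝ] Euc n) := by rw [hV]; exact hy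
          obtain ⟨v, hv, hvy⟩ := Submodule.mem_map.mp hy'
          exact ⟨v, hv, hvy⟩
    · -- backward
      refine ⟨fun m k => if 1 ≤ m then Ψ m k else if 1 ≤ k then S ∘L Ψ 1 k else 1, ?_⟩
      intro m hm k hk hmk
      have hm0 : (0:ℤ) ≤ m := hm
      by_cases hm1 : 1 ≤ m
      · simp only [if_pos hm1]
        have hk1 : (1:ℤ) ≤ k := by omega
        rw [hQge1 m hm1, hQge1 k hk1]
        obtain ⟨ha, hb, hc⟩ := hΨ m hm1 k hk1 hmk
        exact ⟨ha, hb, le_trans hc (mul_le_mul_of_nonneg_right hKK' (le_of_lt (hexppos _)))⟩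
      · have : m = 0 := by omega
        subst this
        simp only [if_neg (by norm_num : ¬ (1:ℤ) ≤ 0)]
        by_cases hk1 : 1 ≤ k
        · simp only [if_pos hk1]
          obtain ⟨ha, hb, hc⟩ := hΨ 1 h1' k hk1 hk1
          refine ⟨?_, ?_, ?_⟩
          · intro x hx
            rw [hQzero] at hx
            have hxV : x ∈ V := (hkerV x).mp (LinearMap.mem_ker.mp hx)
            have hx' : A 0 x ∈ LinearMap.ker (P 1 : Euc n →ₗ[ℝ] Euc n) := hVmapmem x hxV
            have hphi : Phi A k 0 x = Phi A k 1 (A 0 x) := by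
              rw [Phi_split A hk1]; rfl
            rw [ContinuousLinearMap.comp_apply, hphi, ha (A 0 x) hx', hS_inv x hxV]
          · intro x hx
            rw [hQge1 k hk1] at hx
            obtain ⟨hy1, hy2⟩ := hb x hx
            constructor
            · rw [hQzero]
              exact LinearMap.mem_ker.mpr ((hkerV _).mpr (hS_memV (Ψ 1 k x)))
            · rw [ContinuousLinearMap.comp_apply]
              have hphi : Phi A k 0 (S (Ψ 1 k x)) = Phi A k 1 (A 0 (S (Ψ 1 k x))) := by
                rw [Phi_split A hk1]; rfl
              rw [hphi, hS_ker _ hy1, hy2]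
          · rw [hQge1 k hk1]
            have heq : (S ∘L Ψ 1 k) ∘L (1 - P k) = S ∘L (Ψ 1 k ∘L (1 - P k)) := by
              ext x; simp
            rw [heq]
            refine le_trans (ContinuousLinearMap.opNorm_comp_le _ _) ?_
            push_cast at hc
            have hnorm : ‖S‖ * ‖Ψ 1 k ∘L (1 - P k)‖ ≤
                ‖S‖ * (K * Real.exp (-α * ((k:ℝ) - 1))) :=
              mul_le_mul_of_nonneg_left hc (norm_nonneg _)
            refine le_trans hnorm ?_
            push_cast
            rw [hexp k]
            have hfin : ‖S‖ * (K * (Real.exp α * Real.exp (-α * ((k:ℝ) - 0)))) =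
                (K * Real.exp α * ‖S‖) * Real.exp (-α * ((k:ℝ) - 0)) := by ring
            rw [hfin]
            refine mul_le_mul_of_nonneg_right ?_ (le_of_lt (hexppos _))
            rw [hK'def]
            have := norm_nonneg Q0
            have := norm_nonneg ((1 : Euc n →L[ℝ] Euc n) - Q0)
            linarith
        · have : k = 0 := by omega
          subst this
          simp only [if_neg (by norm_num : ¬ (1:ℤ) ≤ 0)]
          refine ⟨?_, ?_, ?_⟩
          · intro x hx
            rw [Phi_self]
            rfl
          · intro x hx
            exact ⟨by simpa using hx, by rw [Phi_self]; rfl⟩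
          · have heq : (1 : Euc n →L[ℝ] Euc n) ∘L (1 - Q 0) =
                (1 : Euc n →L[ℝ] Euc n) - Q0 := by
              rw [hQzero]; ext x; simp
            rw [heq]
            have hzero : -α * (((0:ℤ):ℝ) - ((0:ℤ):ℝ)) = 0 := by push_cast; ring
            rw [hzero, Real.exp_zero, mul_one]
            exact h1mQ0K'
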